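/- (Sanov's theorem, finite alphabet.) Let α be a finite set, let P be a pmf on α, let M ≥ 1 be a natural number, and let E be any set of pmfs on α. If X₁,…,X_M are i.i.d. with common pmf P, then the probability that the empirical distribution p̂ of (X₁,…,X_M) lies in E is at most (M+1)^{|α|} · exp(−M · inf_{p ∈ E} D(p‖P)). -/

import Mathlib

open Finset

/-- `p` is a probability mass function on the finite type `α`. -/
def IsPmf {α : Type*} [Fintype α] (p : α → ℝ) : Prop :=
  (∀ a, 0 ≤ p a) ∧ ∑ a, p a = 1

/-- Kullback–Leibler divergence between pmfs on a finite type, valued in `EReal`: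
it is `+∞` unless `p` is absolutely continuous with respect to `q`, in which case it is
`∑ a, p a * log (p a / q a)` (with `0 * log (0/x) = 0`). -/
noncomputable def klDiv {α : Type*} [Fintype α] (p q : α → ℝ) : EReal :=
  if ∀ a, q a = 0 → p a = 0 then ((∑ a, p a * Real.log (p a / q a) : ℝ) : EReal) else ⊤

/-- Empirical distribution of the sample `x = (x₁, …, x_M)`. -/
noncomputable def empDist {α : Type*} [Fintype α] [DecidableEq α] {M : ℕ}
    (x : Fin M → α) (a : α) : ℝ :=
  ((Finset.univ.filter fun i => x i = a).card : ℝ) / M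

/-- Gibbs' inequality: the KL sum is nonnegative. -/
lemma sum_kl_nonneg {α : Type*} [Fintype α] (p q : α → ℝ)
    (hp : IsPmf p) (hq : IsPmf q) (hac : ∀ a, q a = 0 → p a = 0) :
    0 ≤ ∑ a, p a * Real.log (p a / q a) := by
  have h : ∀ a ∈ univ, p a - q a ≤ p a * Real.log (p a / q a) := by
    intro a _
    rcases eq_or_lt_of_le (hp.1 a) with h0 | hpa
    · rw [← h0]
      simpa using hq.1 a
    · have hqa : 0 < q a := by
        rcases eq_or_lt_of_le (hq.1 a) with h0' | h
        · exact absurd (hac a h0'.symm) hpa.ne'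
        · exact h
      have hlog := Real.log_le_sub_one_of_pos (div_pos hqa hpa)
      have hrw : Real.log (p a / q a) = -Real.log (q a / p a) := by
        rw [Real.log_div hpa.ne' hqa.ne', Real.log_div hqa.ne' hpa.ne']
        ring
      rw [hrw]
      have h1 : q a / p a - 1 = (q a - p a) / p a := by field_simp
      rw [h1] at hlog
      have h2 := mul_le_mul_of_nonneg_left hlog hpa.le
      rw [mul_div_cancel₀ _ hpa.ne'] at h2
      linarith
  calc (0 : ℝ) = ∑ a, (p a - q a) := by rw [Finset.sum_sub_distrib, hp.2, hq.2]; ring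
    _ ≤ _ := Finset.sum_le_sum h

/-- Product over the sample equals product over the alphabet with multiplicities. -/
lemma prod_count {α : Type*} [Fintype α] [DecidableEq α] {M : ℕ}
    (f : α → ℝ) (x : Fin M → α) :
    ∏ i, f (x i) = ∏ a, f a ^ (univ.filter fun i => x i = a).card := by
  have h := Finset.prod_comp (s := (univ : Finset (Fin M))) f x
  rw [h]
  refine Finset.prod_subset (Finset.subset_univ _) ?_
  intro a _ ha
  have he : (univ.filter fun i => x i = a) = ∅ := by
    rw [Finset.filter_eq_empty_iff]
    intro i _ hxi
    exact ha (Finset.mem_image.mpr ⟨i, Finset.mem_univ i, hxi⟩)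
  rw [he]
  simp

/-- Sanov's theorem on a finite alphabet: if `X₁, …, X_M` are i.i.d. with pmf `P`
(so the sample is drawn from the product pmf on `α^M`), then for any set `E` of pmfs
on `α`, the probability that the empirical distribution lies in `E` is at most
`(M+1)^{|α|} · exp(−M·inf_{p ∈ E} D(p‖P))` (the bound being `0` when the infimum is `+∞`). -/
theorem sanov {α : Type*} [Fintype α] [DecidableEq α]
    (P : α → ℝ) (hP : IsPmf P) (M : ℕ) (hM : 1 ≤ M)
    (E : Set (α → ℝ)) (hE : ∀ p ∈ E, IsPmf p) :
    (∑ x : Fin M → α,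
        Set.indicator {x : Fin M → α | empDist x ∈ E} (fun x => ∏ i, P (x i)) x) ≤
      ((M : ℝ) + 1) ^ (Fintype.card α) *
        (if (⨅ p ∈ E, klDiv p P) = ⊤ then 0
         else Real.exp (-(M : ℝ) * (⨅ p ∈ E, klDiv p P).toReal)) := by
  classical
  have hMpos : (0 : ℝ) < M := by exact_mod_cast hM
  set Inf : EReal := ⨅ p ∈ E, klDiv p P with hInfdef
  set B : ℝ := if Inf = ⊤ then 0 else Real.exp (-(M : ℝ) * Inf.toReal) with hBdef
  have hB0 : 0 ≤ B := by
    rw [hBdef]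
    split
    · exact le_refl 0
    · exact (Real.exp_pos _).le
  -- the infimum is nonnegative, hence not ⊥
  have hInf0 : (0 : EReal) ≤ Inf := by
    rw [hInfdef]
    refine le_iInf₂ fun q hq => ?_
    unfold klDiv
    split
    · exact_mod_cast sum_kl_nonneg q P (hE q hq) hP (by assumption)
    · exact le_top
  have hInfbot : Inf ≠ ⊥ := fun h => by simp [h] at hInf0
  -- rewrite the LHS as a filtered sum
  set S : Finset (Fin M → α) := univ.filter (fun x => empDist x ∈ E) with hSdef
  have hLHS : (∑ x : Fin M → α,
      Set.indicator {x : Fin M → α | empDist x ∈ E} (fun x => ∏ i, P (x i)) x)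
      = ∑ x ∈ S, ∏ i, P (x i) := by
    rw [hSdef, Finset.sum_filter]
    refine Finset.sum_congr rfl fun x _ => ?_
    simp [Set.indicator_apply, Set.mem_setOf_eq]
  rw [hLHS]
  -- the type map: counts, valued in Fin (M+1)
  have hcardle : ∀ (x : Fin M → α) (a : α), (univ.filter fun i => x i = a).card < M + 1 := by
    intro x a
    have := Finset.card_filter_le (univ : Finset (Fin M)) (fun i => x i = a)
    simpa using Nat.lt_succ_of_le this
  set key : (Fin M → α) → (α → Fin (M + 1)) :=
    fun x a => ⟨(univ.filter fun i => x i = a).card, hcardle x a⟩ with hkeydef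
  -- fiberwise decomposition
  rw [← Finset.sum_fiberwise S key (fun x => ∏ i, P (x i))]
  -- bound each fiber by B
  have hfiber : ∀ c : α → Fin (M + 1),
      ∑ x ∈ S.filter (fun x => key x = c), ∏ i, P (x i) ≤ B := by
    intro c
    set F := S.filter (fun x => key x = c) with hFdef
    rcases F.eq_empty_or_nonempty with hFe | ⟨x₀, hx₀⟩
    · rw [hFe]; simpa using hB0
    · -- extract data about x₀
      have hx₀S : x₀ ∈ S := (Finset.mem_filter.mp hx₀).1
      have hx₀key : key x₀ = c := (Finset.mem_filter.mp hx₀).2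
      set p : α → ℝ := empDist x₀ with hpdef
      have hpE : p ∈ E := by
        have := Finset.mem_filter.mp hx₀S
        exact this.2
      have hpPmf : IsPmf p := hE p hpE
      set k : α → ℕ := fun a => (univ.filter fun i => x₀ i = a).card with hkdef
      have hpk : ∀ a, p a = (k a : ℝ) / M := fun a => rfl
      have hkp : ∀ a, (k a : ℝ) = M * p a := by
        intro a; rw [hpk a]; field_simp
      -- every member of the fiber has the same counts
      have hcount : ∀ x ∈ F, ∀ a, (univ.filter fun i => x i = a).card = k a := by
        intro x hx a
        have hkx : key x = c := (Finset.mem_filter.mp hx).2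
        have : key x a = key x₀ a := by rw [hkx, hx₀key]
        simpa [hkeydef, Fin.mk.injEq] using this
      -- every member of the fiber has the same product
      have hprodP : ∀ x ∈ F, ∏ i, P (x i) = ∏ a, P a ^ k a := by
        intro x hx
        rw [prod_count P x]
        exact Finset.prod_congr rfl fun a _ => by rw [hcount x hx a]
      have hprodp : ∀ x ∈ F, ∏ i, p (x i) = ∏ a, p a ^ k a := by
        intro x hx
        rw [prod_count p x]
        exact Finset.prod_congr rfl fun a _ => by rw [hcount x hx a]
      have hsumF : ∑ x ∈ F, ∏ i, P (x i) = (F.card : ℝ) * ∏ a, P a ^ k a := by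
        rw [Finset.sum_congr rfl hprodP, Finset.sum_const, nsmul_eq_mul]
      -- size-times-p-probability bound
      have hsize : (F.card : ℝ) * ∏ a, p a ^ k a ≤ 1 := by
        have h1 : ∑ x ∈ F, ∏ i, p (x i) = (F.card : ℝ) * ∏ a, p a ^ k a := by
          rw [Finset.sum_congr rfl hprodp, Finset.sum_const, nsmul_eq_mul]
        have h2 : ∑ x ∈ F, ∏ i, p (x i) ≤ ∑ x : Fin M → α, ∏ i, p (x i) := by
          refine Finset.sum_le_sum_of_subset_of_nonneg (Finset.subset_univ F) ?_
          intro x _ _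
          exact Finset.prod_nonneg fun i _ => hpPmf.1 (x i)
        have h3 : ∑ x : Fin M → α, ∏ i, p (x i) = 1 := by
          have := Finset.prod_univ_sum (fun _ : Fin M => (univ : Finset α))
            (fun _ a => p a)
          rw [Fintype.piFinset_univ] at this
          rw [← this]
          simp [hpPmf.2]
        rw [← h1]
        rw [h3] at h2
        exact h2
      rw [hsumF]
      -- split on absolute continuity of p w.r.t. P
      by_cases hac : ∀ a, P a = 0 → p a = 0
      · -- main case
        set D : ℝ := ∑ a, p a * Real.log (p a / P a) with hDdef
        have hkl : klDiv p P = (D : EReal) := by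
          rw [klDiv, if_pos hac]
        have hInfle : Inf ≤ (D : EReal) := by
          rw [hInfdef, ← hkl]
          exact iInf₂_le p hpE
        have hInftop : Inf ≠ ⊤ := by
          intro h
          rw [h, top_le_iff] at hInfle
          exact (EReal.coe_ne_top D) hInfle
        have hBeq : B = Real.exp (-(M : ℝ) * Inf.toReal) := by
          rw [hBdef, if_neg hInftop]
        have hInfD : Inf.toReal ≤ D := by
          have := EReal.toReal_le_toReal hInfle hInfbot (EReal.coe_ne_top D)
          simpa using this
        -- key identity: ∏ P a ^ k a = exp (-M * D) * ∏ p a ^ k a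
        have hkey : ∏ a, P a ^ k a = Real.exp (-(M : ℝ) * D) * ∏ a, p a ^ k a := by
          have hterm : ∀ a, P a ^ k a
              = Real.exp ((k a : ℝ) * Real.log (P a / p a)) * p a ^ k a := by
            intro a
            rcases Nat.eq_zero_or_pos (k a) with hk0 | hkpos
            · simp [hk0]
            · have hpa : 0 < p a := by
                rw [hpk a]
                exact div_pos (Nat.cast_pos.mpr hkpos) hMpos
              have hPa : 0 < P a := by
                rcases eq_or_lt_of_le (hP.1 a) with h0 | h
                · exact absurd (hac a h0.symm) hpa.ne'
                · exact h
              have hdiv : 0 < P a / p a := div_pos hPa hpa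
              rw [Real.exp_nat_mul, Real.exp_log hdiv, div_pow,
                div_mul_cancel₀]
              positivity
          have hsumexp : ∑ a, (k a : ℝ) * Real.log (P a / p a) = -(M : ℝ) * D := by
            rw [hDdef, Finset.mul_sum]
            refine Finset.sum_congr rfl fun a _ => ?_
            rcases Nat.eq_zero_or_pos (k a) with hk0 | hkpos
            · have hpa : p a = 0 := by rw [hpk a, hk0]; simp
              simp [hk0, hpa]
            · have hpa : 0 < p a := by rw [hpk a]; exact div_pos (Nat.cast_pos.mpr hkpos) hMpos
              have hPa : 0 < P a := by
                rcases eq_or_lt_of_le (hP.1 a) with h0 | h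
                · exact absurd (hac a h0.symm) hpa.ne'
                · exact h
              rw [hkp a, Real.log_div hPa.ne' hpa.ne', Real.log_div hpa.ne' hPa.ne']
              ring
          calc ∏ a, P a ^ k a
              = ∏ a, (Real.exp ((k a : ℝ) * Real.log (P a / p a)) * p a ^ k a) :=
                Finset.prod_congr rfl fun a _ => hterm a
            _ = (∏ a, Real.exp ((k a : ℝ) * Real.log (P a / p a))) * ∏ a, p a ^ k a :=
                Finset.prod_mul_distrib
            _ = Real.exp (-(M : ℝ) * D) * ∏ a, p a ^ k a := by
                rw [← Real.exp_sum, hsumexp]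
        calc (F.card : ℝ) * ∏ a, P a ^ k a
            = Real.exp (-(M : ℝ) * D) * ((F.card : ℝ) * ∏ a, p a ^ k a) := by
              rw [hkey]; ring
          _ ≤ Real.exp (-(M : ℝ) * D) * 1 := by
              refine mul_le_mul_of_nonneg_left hsize (Real.exp_pos _).le
          _ = Real.exp (-(M : ℝ) * D) := mul_one _
          _ ≤ B := by
              rw [hBeq]
              apply Real.exp_le_exp.mpr
              have : (0:ℝ) ≤ (M : ℝ) := hMpos.le
              nlinarith [hInfD]
      · -- degenerate case: some P a = 0 with p a ≠ 0, product is 0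
        push_neg at hac
        obtain ⟨a, hPa, hpa⟩ := hac
        have hka : 0 < k a := by
          by_contra h
          push_neg at h
          have : k a = 0 := Nat.le_zero.mp h
          exact hpa (by rw [hpk a, this]; simp)
        have : ∏ b, P b ^ k b = 0 := by
          apply Finset.prod_eq_zero (Finset.mem_univ a)
          rw [hPa, zero_pow hka.ne']
        rw [this, mul_zero]
        exact hB0
  calc ∑ c : α → Fin (M + 1), ∑ x ∈ S.filter (fun x => key x = c), ∏ i, P (x i)
      ≤ ∑ _c : α → Fin (M + 1), B := Finset.sum_le_sum fun c _ => hfiber c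
    _ = (Fintype.card (α → Fin (M + 1)) : ℝ) * B := by
        rw [Finset.sum_const, nsmul_eq_mul, Fintype.card]
    _ = ((M : ℝ) + 1) ^ (Fintype.card α) * B := by
        rw [Fintype.card_fun, Fintype.card_fin]
        push_cast
        ring
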